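/- Let X₁ and X₂ be right Hilbert C*-modules over a C*-algebra A and let S : X₁ → X₂ be a surjective linear isometry which is an A-module map, i.e. S(xa) = S(x)a for all x ∈ X₁ and a ∈ A. Then S preserves the inner product: ⟨Sx, Sy⟩₂ = ⟨x, y⟩₁ for all x, y ∈ X₁. -/

import Mathlib

open scoped ComplexOrder

variable {H : Type*} [NormedAddCommGroup H] [InnerProductSpace ℂ H] [CompleteSpace H]
variable {K : Type*} [NormedAddCommGroup K] [InnerProductSpace ℂ K] [CompleteSpace K]

/-- `x` is a (self-adjoint) projection belonging to the von Neumann algebra `M`. -/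
def IsVNProjection (M : VonNeumannAlgebra H) (p : H →L[ℂ] H) : Prop :=
  p ∈ M ∧ p * p = p ∧ star p = p

/-- `z` is a central element of the von Neumann algebra `M`. -/
def IsCentral (M : VonNeumannAlgebra H) (z : H →L[ℂ] H) : Prop :=
  z ∈ M ∧ ∀ y ∈ M, z * y = y * z

/-- The projection `p` has central support `1` in `M`: the only central projection `z`
of `M` with `z * p = p` is `z = 1`. -/
def HasFullCentralSupport (M : VonNeumannAlgebra H) (p : H →L[ℂ] H) : Prop :=
  ∀ z : H →L[ℂ] H, IsVNProjection M z → IsCentral M z → z * p = p → z = 1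

/-- The off-diagonal corner `p M (1 - p)` of a von Neumann algebra `M`, as a complex
subspace of the bounded operators. -/
def offCorner (M : VonNeumannAlgebra H) (p : H →L[ℂ] H) : Submodule ℂ (H →L[ℂ] H) where
  carrier := {x | x ∈ M ∧ p * x * (1 - p) = x}
  add_mem' := by
    rintro x y ⟨hxM, hx⟩ ⟨hyM, hy⟩
    exact ⟨add_mem hxM hyM, by rw [mul_add, add_mul, hx, hy]⟩
  zero_mem' := ⟨zero_mem _, by simp⟩
  smul_mem' := by
    rintro c x ⟨hxM, hx⟩
    refine ⟨?_, by rw [mul_smul_comm, smul_mul_assoc, hx]⟩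
    have : c • x = (algebraMap ℂ (H →L[ℂ] H) c) * x := by
      simp [Algebra.algebraMap_eq_smul_one, smul_mul_assoc]
    rw [this]
    exact mul_mem (M.toStarSubalgebra.algebraMap_mem c) hxM

/-- The corner `e M e` of a von Neumann algebra `M`, as a set of bounded operators. -/
def cornerSet (M : VonNeumannAlgebra H) (e : H →L[ℂ] H) : Set (H →L[ℂ] H) :=
  {x | x ∈ M ∧ e * x * e = x}

/-- `Ψ` restricts to a `*`-isomorphism from the set `S` onto the set `S'`. -/
structure IsStarIsoOn {H K : Type*} [NormedAddCommGroup H] [InnerProductSpace ℂ H] [CompleteSpace H]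
    [NormedAddCommGroup K] [InnerProductSpace ℂ K] [CompleteSpace K]
    (Ψ : (H →L[ℂ] H) → (K →L[ℂ] K)) (S : Set (H →L[ℂ] H)) (S' : Set (K →L[ℂ] K)) : Prop where
  bijOn : Set.BijOn Ψ S S'
  map_add : ∀ x ∈ S, ∀ y ∈ S, Ψ (x + y) = Ψ x + Ψ y
  map_smul : ∀ (c : ℂ), ∀ x ∈ S, Ψ (c • x) = c • Ψ x
  map_mul : ∀ x ∈ S, ∀ y ∈ S, Ψ (x * y) = Ψ x * Ψ y
  map_star : ∀ x ∈ S, Ψ (star x) = star (Ψ x)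

/-- `Φ` restricts to a `*`-antiisomorphism from the set `S` onto the set `S'`. -/
structure IsStarAntiIsoOn {H K : Type*} [NormedAddCommGroup H] [InnerProductSpace ℂ H]
    [CompleteSpace H] [NormedAddCommGroup K] [InnerProductSpace ℂ K] [CompleteSpace K]
    (Φ : (H →L[ℂ] H) → (K →L[ℂ] K)) (S : Set (H →L[ℂ] H)) (S' : Set (K →L[ℂ] K)) : Prop where
  bijOn : Set.BijOn Φ S S'
  map_add : ∀ x ∈ S, ∀ y ∈ S, Φ (x + y) = Φ x + Φ y
  map_smul : ∀ (c : ℂ), ∀ x ∈ S, Φ (c • x) = c • Φ x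
  map_mul : ∀ x ∈ S, ∀ y ∈ S, Φ (x * y) = Φ y * Φ x
  map_star : ∀ x ∈ S, Φ (star x) = star (Φ x)

/-- `r` is the supremum, in the projection lattice of the von Neumann algebra `M`, of the
family of projections `f`: it is a projection in `M` dominating every `f i`, and it
vanishes on every vector annihilated by all the `f i`. -/
def IsProjSup {H : Type*} [NormedAddCommGroup H] [InnerProductSpace ℂ H] [CompleteSpace H]
    {ι : Sort*} (M : VonNeumannAlgebra H) (r : H →L[ℂ] H) (f : ι → (H →L[ℂ] H)) : Prop :=
  IsVNProjection M r ∧ (∀ i, r * f i = f i) ∧ ∀ v : H, (∀ i, f i v = 0) → r v = 0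

/-- `r₀` is the infimum, in the projection lattice of the von Neumann algebra `M`, of the
family of projections `f`: it is a projection in `M` dominated by every `f i`, and it fixes
every vector fixed by all the `f i`. -/
def IsProjInf {H : Type*} [NormedAddCommGroup H] [InnerProductSpace ℂ H] [CompleteSpace H]
    {ι : Sort*} (M : VonNeumannAlgebra H) (r₀ : H →L[ℂ] H) (f : ι → (H →L[ℂ] H)) : Prop :=
  IsVNProjection M r₀ ∧ (∀ i, f i * r₀ = r₀) ∧ ∀ v : H, (∀ i, f i v = v) → r₀ v = v


/-- The Hilbert C⋆-module class `CStarModule` as it stood in Mathlib of December 2024 (a right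
`A`-module through `Aᵐᵒᵖ`, with `⟪x, y <• a⟫ = ⟪x, y⟫ * a`); Mathlib's `CStarModule` is now a left
module with another axiom, so the old notion is spelled out here under a new name. -/
class RightCStarModule (A : outParam Type*) (E : Type*) [NonUnitalSemiring A] [StarRing A]
    [Module ℂ A] [AddCommGroup E] [Module ℂ E] [PartialOrder A] [SMul Aᵐᵒᵖ E] [Norm A] [Norm E]
    extends Inner A E where
  inner_add_right {x} {y} {z} : inner x (y + z) = inner x y + inner x z
  inner_self_nonneg {x} : 0 ≤ inner x x
  inner_self {x} : inner x x = 0 ↔ x = 0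
  inner_op_smul_right {a : A} {x y : E} : inner x (MulOpposite.op a • y) = inner x y * a
  inner_smul_right_complex {z : ℂ} {x} {y} : inner x (z • y) = z • inner x y
  star_inner x y : star (inner x y) = inner y x
  norm_eq_sqrt_norm_inner_self x : ‖x‖ = √‖inner x x‖

section RightCStarModuleAux
namespace RightCStarModule

lemma inner_add_left {A : Type*} [NonUnitalCStarAlgebra A] [PartialOrder A] [StarOrderedRing A]
    {E : Type*} [NormedAddCommGroup E] [NormedSpace ℂ E] [SMul Aᵐᵒᵖ E] [RightCStarModule A E]
    {x y z : E} : inner A (x + y) z = inner A x z + inner A y z := by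
  rw [← star_inner z (x + y), inner_add_right, star_add, star_inner, star_inner]

lemma inner_neg_right {A : Type*} [NonUnitalCStarAlgebra A] [PartialOrder A] [StarOrderedRing A]
    {E : Type*} [NormedAddCommGroup E] [NormedSpace ℂ E] [SMul Aᵐᵒᵖ E] [RightCStarModule A E]
    {x y : E} : inner A x (-y) = -inner A x y := by
  have := inner_smul_right_complex (A := A) (z := (-1 : ℂ)) (x := x) (y := y)
  simpa using this

lemma inner_sub_right {A : Type*} [NonUnitalCStarAlgebra A] [PartialOrder A] [StarOrderedRing A]
    {E : Type*} [NormedAddCommGroup E] [NormedSpace ℂ E] [SMul Aᵐᵒᵖ E] [RightCStarModule A E]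
    {x y z : E} : inner A x (y - z) = inner A x y - inner A x z := by
  rw [sub_eq_add_neg, inner_add_right, inner_neg_right, ← sub_eq_add_neg]

lemma inner_sub_left {A : Type*} [NonUnitalCStarAlgebra A] [PartialOrder A] [StarOrderedRing A]
    {E : Type*} [NormedAddCommGroup E] [NormedSpace ℂ E] [SMul Aᵐᵒᵖ E] [RightCStarModule A E]
    {x y z : E} : inner A (x - y) z = inner A x z - inner A y z := by
  rw [← star_inner z (x - y), inner_sub_right, star_sub, star_inner, star_inner]

lemma inner_smul_left_complex {A : Type*} [NonUnitalCStarAlgebra A] [PartialOrder A]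
    [StarOrderedRing A] {E : Type*} [NormedAddCommGroup E] [NormedSpace ℂ E] [SMul Aᵐᵒᵖ E]
    [RightCStarModule A E] {z : ℂ} {x y : E} : inner A (z • x) y = star z • inner A x y := by
  rw [← star_inner y (z • x), inner_smul_right_complex, star_smul, star_inner]

lemma inner_op_smul_left {A : Type*} [NonUnitalCStarAlgebra A] [PartialOrder A]
    [StarOrderedRing A] {E : Type*} [NormedAddCommGroup E] [NormedSpace ℂ E] [SMul Aᵐᵒᵖ E]
    [RightCStarModule A E] {a : A} {x y : E} :
    inner A (MulOpposite.op a • x) y = star a * inner A x y := by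
  rw [← star_inner y (MulOpposite.op a • x), inner_op_smul_right, star_mul, star_inner]

lemma norm_sq_eq {A : Type*} [NonUnitalCStarAlgebra A] [PartialOrder A]
    [StarOrderedRing A] {E : Type*} [NormedAddCommGroup E] [NormedSpace ℂ E] [SMul Aᵐᵒᵖ E]
    [RightCStarModule A E] (x : E) : ‖x‖ ^ 2 = ‖inner A x x‖ := by
  rw [norm_eq_sqrt_norm_inner_self (A := A) x, Real.sq_sqrt (norm_nonneg _)]

end RightCStarModule
end RightCStarModuleAux



open scoped CStarAlgebra RightActions in
private lemma key_le_aux {A : Type*} [NonUnitalCStarAlgebra A] [PartialOrder A] [StarOrderedRing A]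
    {b c : A} (hb : 0 ≤ b) (hc : 0 ≤ c)
    (h : ∀ a : A⁺¹, ‖star a * (b : A⁺¹) * a‖ = ‖star a * (c : A⁺¹) * a‖) :
    c ≤ b := by
  have hbsa : IsSelfAdjoint b := .of_nonneg hb
  have hcsa : IsSelfAdjoint c := .of_nonneg hc
  rw [← Unitization.inr_le_iff c b hcsa hbsa]
  have hb' : (0 : A⁺¹) ≤ (b : A⁺¹) := Unitization.inr_nonneg_iff.mpr hb
  have hc' : (0 : A⁺¹) ≤ (c : A⁺¹) := Unitization.inr_nonneg_iff.mpr hc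
  have main : ∀ ε : ℝ, 0 < ε → (c : A⁺¹) ≤ (b : A⁺¹) + algebraMap ℝ A⁺¹ ε := by
    intro ε hε
    set b' := (b : A⁺¹) with hb'def
    set c' := (c : A⁺¹) with hc'def
    have hb'sa : IsSelfAdjoint b' := .of_nonneg hb'
    have hspec : ∀ t ∈ spectrum ℝ b', 0 ≤ t := fun t ht => spectrum_nonneg_of_nonneg hb' ht
    set f : ℝ → ℝ := fun t => Real.sqrt (t + ε)⁻¹ with hfdef
    set g : ℝ → ℝ := fun t => Real.sqrt (t + ε) with hgdef
    have hcont : ∀ t ∈ spectrum ℝ b', t + ε ≠ 0 := fun t ht => by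
      have := hspec t ht; positivity
    have hfc : ContinuousOn f (spectrum ℝ b') := by
      apply Real.continuous_sqrt.comp_continuousOn
      exact ((continuous_id.add continuous_const).continuousOn).inv₀ hcont
    have hgc : ContinuousOn g (spectrum ℝ b') :=
      Real.continuous_sqrt.comp_continuousOn ((continuous_id.add continuous_const).continuousOn)
    set a := cfc f b' with hadef
    set d := cfc g b' with hddef
    have ha_sa : IsSelfAdjoint a := cfc_predicate f b'
    have hd_sa : IsSelfAdjoint d := cfc_predicate g b'
    have hmulfg : ∀ t ∈ spectrum ℝ b', g t * f t = 1 := by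
      intro t ht
      have h0 := hspec t ht
      have h1 : (0:ℝ) < t + ε := by linarith
      rw [hfdef, hgdef]
      simp only []
      rw [← Real.sqrt_mul (by linarith) _, mul_inv_cancel₀ (by linarith), Real.sqrt_one]
    have hda : d * a = 1 := by
      rw [← cfc_mul g f b' hgc hfc, ← cfc_one (R := ℝ) b' hb'sa]
      exact cfc_congr hmulfg
    have had : a * d = 1 := by
      rw [← cfc_mul f g b' hfc hgc, ← cfc_one (R := ℝ) b' hb'sa]
      exact cfc_congr (fun t ht => by rw [mul_comm]; exact hmulfg t ht)
    have hdd : d * d = b' + algebraMap ℝ A⁺¹ ε := by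
      rw [← cfc_mul g g b' hgc hgc]
      have e : cfc (fun t => g t * g t) b' = cfc (fun t : ℝ => t + ε) b' := by
        apply cfc_congr
        intro t ht
        exact Real.mul_self_sqrt (by have := hspec t ht; linarith)
      rw [e, cfc_add b' (fun t : ℝ => t) (fun _ => ε) (by fun_prop) (by fun_prop),
        cfc_id' ℝ b' hb'sa, cfc_const ε b' hb'sa]
    have halg_nonneg : (0 : A⁺¹) ≤ algebraMap ℝ A⁺¹ ε := by
      rw [Algebra.algebraMap_eq_smul_one]
      exact smul_nonneg hε.le zero_le_one
    have h1 : star a * b' * a ≤ 1 := by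
      calc star a * b' * a ≤ star a * (b' + algebraMap ℝ A⁺¹ ε) * a :=
            star_left_conjugate_le_conjugate (le_add_of_nonneg_right halg_nonneg) a
        _ = a * (d * d) * a := by rw [hdd, ha_sa.star_eq]
        _ = (a * d) * (d * a) := by rw [← mul_assoc a d d, mul_assoc (a * d) d a]
        _ = 1 := by rw [had, hda, one_mul]
    have h2 : (0 : A⁺¹) ≤ star a * b' * a := star_left_conjugate_nonneg hb' a
    have h3 : ‖star a * c' * a‖ ≤ 1 := by
      rw [← h a]
      calc ‖star a * b' * a‖ ≤ ‖(1 : A⁺¹)‖ := CStarAlgebra.norm_le_norm_of_nonneg_of_le h2 h1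
        _ = 1 := norm_one
    have h4sa : IsSelfAdjoint (star a * c' * a) := .of_nonneg (star_left_conjugate_nonneg hc' a)
    have h4 : star a * c' * a ≤ 1 := by
      refine (h4sa.le_algebraMap_norm_self).trans ?_
      calc algebraMap ℝ A⁺¹ ‖star a * c' * a‖ ≤ algebraMap ℝ A⁺¹ 1 := by
            rw [← sub_nonneg, ← map_sub, Algebra.algebraMap_eq_smul_one]
            exact smul_nonneg (by linarith) zero_le_one
        _ = 1 := map_one _
    have h5 := star_left_conjugate_le_conjugate h4 d
    rw [hd_sa.star_eq, mul_one, ha_sa.star_eq] at h5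
    have e1 : d * (a * c' * a) * d = c' := by
      have e0 : d * (a * c' * a) * d = (d * a) * c' * (a * d) := by noncomm_ring
      rw [e0, hda, had, one_mul, mul_one]
    rw [e1, hdd] at h5
    exact h5
  have key0 : (0 : A⁺¹) ≤ (b : A⁺¹) - (c : A⁺¹) := by
    have htend : Filter.Tendsto (fun n : ℕ => ((b : A⁺¹) - (c : A⁺¹)) + ((1:ℝ)/(n+1)) • 1)
        Filter.atTop (nhds ((b : A⁺¹) - (c : A⁺¹))) := by
      have h0 : Filter.Tendsto (fun n : ℕ => ((1:ℝ)/(n+1))) Filter.atTop (nhds 0) :=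
        tendsto_one_div_add_atTop_nhds_zero_nat
      have := (h0.smul_const ((1 : A⁺¹))).const_add ((b : A⁺¹) - (c : A⁺¹))
      rw [zero_smul, add_zero] at this
      exact this
    refine CStarAlgebra.isClosed_nonneg.mem_of_tendsto htend ?_
    refine Filter.Eventually.of_forall fun n => ?_
    have hmain := main ((1:ℝ)/(n+1)) (by positivity)
    have h' : (0 : A⁺¹) ≤ ((b : A⁺¹) + algebraMap ℝ A⁺¹ ((1:ℝ)/(n+1))) - (c : A⁺¹) :=
      sub_nonneg.mpr hmain
    rw [Set.mem_setOf_eq]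
    rw [Algebra.algebraMap_eq_smul_one] at h'
    convert h' using 1
    abel
  exact sub_nonneg.mp key0

open scoped CStarAlgebra RightActions in
private lemma inner_expand_aux {A : Type*} [NonUnitalCStarAlgebra A] [PartialOrder A]
    [StarOrderedRing A] {E : Type*} [NormedAddCommGroup E] [NormedSpace ℂ E] [SMul Aᵐᵒᵖ E]
    [RightCStarModule A E] (v : E) (z : ℂ) (g : A) :
    ((inner A (z • v + v <• g) (z • v + v <• g) : A) : A⁺¹)
      = star (Unitization.inl z + (g : A⁺¹)) * ((inner A v v : A) : A⁺¹)
          * (Unitization.inl z + (g : A⁺¹)) := by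
  simp only [← Unitization.algebraMap_eq_inl, Algebra.algebraMap_eq_smul_one,
    RightCStarModule.inner_add_left, RightCStarModule.inner_add_right,
    RightCStarModule.inner_smul_left_complex, RightCStarModule.inner_smul_right_complex,
    RightCStarModule.inner_op_smul_left, RightCStarModule.inner_op_smul_right,
    star_add, star_smul, star_one, ← Unitization.inr_star,
    add_mul, mul_add, Unitization.inr_mul, Unitization.inr_add, Unitization.inr_smul,
    smul_smul, smul_mul_assoc, mul_smul_comm, one_mul, mul_one]

open scoped RightActions in
private lemma cstar_polar_aux {A : Type*} [NonUnitalCStarAlgebra A] [PartialOrder A]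
    [StarOrderedRing A] {E : Type*} [NormedAddCommGroup E] [NormedSpace ℂ E] [SMul Aᵐᵒᵖ E]
    [RightCStarModule A E] (x y : E) :
    (inner A x y : A) = (4:ℂ)⁻¹ • (((inner A (x+y) (x+y) : A) - (inner A (x-y) (x-y) : A))
      - Complex.I • ((inner A (x + Complex.I • y) (x + Complex.I • y) : A)
          - (inner A (x - Complex.I • y) (x - Complex.I • y) : A))) := by
  simp only [RightCStarModule.inner_add_left, RightCStarModule.inner_add_right,
    RightCStarModule.inner_sub_left, RightCStarModule.inner_sub_right,
    RightCStarModule.inner_smul_left_complex, RightCStarModule.inner_smul_right_complex,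
    Complex.star_def, Complex.conj_I]
  match_scalars
  all_goals (ring_nf; try simp [Complex.I_sq]; try ring_nf; try norm_num)

theorem isometric_module_map_preserves_inner
    {A : Type*} [NonUnitalCStarAlgebra A] [PartialOrder A] [StarOrderedRing A]
    {X₁ : Type*} [NormedAddCommGroup X₁] [NormedSpace ℂ X₁] [SMul Aᵐᵒᵖ X₁]
    [RightCStarModule A X₁] [CompleteSpace X₁]
    {X₂ : Type*} [NormedAddCommGroup X₂] [NormedSpace ℂ X₂] [SMul Aᵐᵒᵖ X₂]
    [RightCStarModule A X₂] [CompleteSpace X₂]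
    (S : X₁ ≃ₗᵢ[ℂ] X₂)
    (hmod : ∀ (x : X₁) (a : A), S (MulOpposite.op a • x) = MulOpposite.op a • S x)
    (x y : X₁) :
    (inner A (S x) (S y) : A) = inner A x y := by
  classical
  have norm_pres : ∀ w : X₁, (inner A (S w) (S w) : A) = inner A w w := by
    intro w
    have hyp : ∀ a : Unitization ℂ A,
        ‖star a * ((inner A w w : A) : Unitization ℂ A) * a‖
          = ‖star a * ((inner A (S w) (S w) : A) : Unitization ℂ A) * a‖ := by
      intro a
      have ha : a = Unitization.inl a.fst + (a.snd : Unitization ℂ A) :=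
        (Unitization.inl_fst_add_inr_snd_eq a).symm
      set z : ℂ := a.fst
      set g : A := a.snd
      set u : X₁ := z • w + MulOpposite.op g • w with hu
      have hSu : S u = z • S w + MulOpposite.op g • S w := by
        rw [hu, map_add, LinearIsometryEquiv.map_smul, hmod]
      have hnormu : ‖(inner A u u : A)‖ = ‖(inner A (S u) (S u) : A)‖ := by
        rw [← RightCStarModule.norm_sq_eq, ← RightCStarModule.norm_sq_eq, S.norm_map]
      rw [ha, ← inner_expand_aux w z g, ← inner_expand_aux (S w) z g, ← hSu, ← hu,
        Unitization.norm_inr, Unitization.norm_inr]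
      exact hnormu
    have hle1 : (inner A (S w) (S w) : A) ≤ inner A w w :=
      key_le_aux RightCStarModule.inner_self_nonneg RightCStarModule.inner_self_nonneg hyp
    have hle2 : (inner A w w : A) ≤ inner A (S w) (S w) :=
      key_le_aux RightCStarModule.inner_self_nonneg RightCStarModule.inner_self_nonneg
        (fun a => (hyp a).symm)
    exact le_antisymm hle1 hle2
  have h1 : (inner A (S x + S y) (S x + S y) : A) = inner A (x + y) (x + y) := by
    rw [← map_add]; exact norm_pres _
  have h2 : (inner A (S x - S y) (S x - S y) : A) = inner A (x - y) (x - y) := by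
    rw [← map_sub]; exact norm_pres _
  have h3 : (inner A (S x + Complex.I • S y) (S x + Complex.I • S y) : A)
      = inner A (x + Complex.I • y) (x + Complex.I • y) := by
    rw [← LinearIsometryEquiv.map_smul, ← map_add]; exact norm_pres _
  have h4 : (inner A (S x - Complex.I • S y) (S x - Complex.I • S y) : A)
      = inner A (x - Complex.I • y) (x - Complex.I • y) := by
    rw [← LinearIsometryEquiv.map_smul, ← map_sub]; exact norm_pres _
  rw [cstar_polar_aux (S x) (S y), h1, h2, h3, h4, ← cstar_polar_aux x y]
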